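/- Let A be a finite set with |A| = a, let B ⊆ A with |B| = b, and let integers c, d satisfy 0 ≤ c, b + c ≤ a. Let S be a uniformly random subset of A of size c, and let Y be a binomial random variable with parameters c and b/(a−c). Then Pr[ |S ∩ B| ≥ d ] ≤ Pr[ Y ≥ d ]. -/

import Mathlib

open Finset


private lemma fiber_card {α : Type*} [DecidableEq α] (A B : Finset α) (hBA : B ⊆ A)
    (c j : ℕ) (hj : j ≤ c) :
    ((A.powersetCard c).filter fun S => (S ∩ B).card = j).card
      = B.card.choose j * (A.card - B.card).choose (c - j) := by
  rw [← Finset.card_powersetCard j B, ← Finset.card_sdiff_of_subset hBA,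
    ← Finset.card_powersetCard (c - j) (A \ B), ← Finset.card_product]
  refine Finset.card_bij' (fun S _ => (S ∩ B, S \ B)) (fun P _ => P.1 ∪ P.2) ?_ ?_ ?_ ?_
  · intro S hS
    simp only [Finset.mem_filter, Finset.mem_powersetCard] at hS
    obtain ⟨⟨hSA, hSc⟩, hSj⟩ := hS
    simp only [Finset.mem_product, Finset.mem_powersetCard]
    refine ⟨⟨Finset.inter_subset_right, hSj⟩, ⟨?_, ?_⟩⟩
    · exact Finset.sdiff_subset_sdiff hSA le_rfl
    · have := Finset.card_inter_add_card_sdiff S B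
      omega
  · intro P hP
    simp only [Finset.mem_product, Finset.mem_powersetCard] at hP
    obtain ⟨⟨hTB, hTj⟩, hUA, hUc⟩ := hP
    have hdisj : Disjoint P.1 P.2 := by
      refine Finset.disjoint_left.mpr fun x hx1 hx2 => ?_
      exact (Finset.mem_sdiff.mp (hUA hx2)).2 (hTB hx1)
    simp only [Finset.mem_filter, Finset.mem_powersetCard]
    constructor
    · constructor
      · exact Finset.union_subset (hTB.trans hBA) (hUA.trans (Finset.sdiff_subset))
      · rw [Finset.card_union_of_disjoint hdisj, hTj, hUc]; omega
    · have h1 : P.1 ∩ B = P.1 := Finset.inter_eq_left.mpr hTB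
      have h2 : P.2 ∩ B = ∅ := by
        refine Finset.eq_empty_of_forall_notMem fun x hx => ?_
        rw [Finset.mem_inter] at hx
        exact (Finset.mem_sdiff.mp (hUA hx.1)).2 hx.2
      rw [Finset.union_inter_distrib_right, h1, h2, Finset.union_empty, hTj]
  · intro S hS
    simp only
    rw [Finset.union_comm, Finset.sdiff_union_inter]
  · intro P hP
    simp only [Finset.mem_product, Finset.mem_powersetCard] at hP
    obtain ⟨⟨hTB, hTj⟩, hUA, hUc⟩ := hP
    have h1 : P.1 ∩ B = P.1 := Finset.inter_eq_left.mpr hTB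
    have h2 : P.2 ∩ B = ∅ := by
      refine Finset.eq_empty_of_forall_notMem fun x hx => ?_
      rw [Finset.mem_inter] at hx
      exact (Finset.mem_sdiff.mp (hUA hx.1)).2 hx.2
    have h3 : P.1 \ B = ∅ := Finset.sdiff_eq_empty_iff_subset.mpr hTB
    have h4 : P.2 \ B = P.2 := by
      refine Finset.sdiff_eq_self_iff_disjoint.mpr (Finset.disjoint_left.mpr fun x hx hxB => ?_)
      exact (Finset.mem_sdiff.mp (hUA hx)).2 hxB
    ext x <;> simp only [Finset.union_inter_distrib_right, Finset.union_sdiff_distrib,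
      h1, h2, h3, h4, Finset.union_empty, Finset.empty_union]


private def Ncount (a b c : ℕ) (d : ℤ) : ℕ :=
  ∑ j ∈ Finset.range (c + 1), if d ≤ (j : ℤ) then b.choose j * (a - b).choose (c - j) else 0

private lemma count_eq {α : Type*} [DecidableEq α] (A B : Finset α) (hBA : B ⊆ A)
    (c : ℕ) (d : ℤ) :
    ((A.powersetCard c).filter fun S => d ≤ ((S ∩ B).card : ℤ)).card
      = Ncount A.card B.card c d := by
  rw [Finset.card_filter]
  have hmap : ∀ S ∈ A.powersetCard c, (S ∩ B).card ∈ Finset.range (c + 1) := by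
    intro S hS
    rw [Finset.mem_powersetCard] at hS
    rw [Finset.mem_range, Nat.lt_succ_iff, ← hS.2]
    exact Finset.card_le_card Finset.inter_subset_left
  rw [← Finset.sum_fiberwise_of_maps_to hmap]
  unfold Ncount
  refine Finset.sum_congr rfl fun j hj => ?_
  have hj' : j ≤ c := Nat.lt_succ_iff.mp (Finset.mem_range.mp hj)
  have : ∀ S ∈ (A.powersetCard c).filter fun S => (S ∩ B).card = j,
      (if d ≤ ((S ∩ B).card : ℤ) then (1:ℕ) else 0) = if d ≤ (j:ℤ) then 1 else 0 := by
    intro S hS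
    rw [(Finset.mem_filter.mp hS).2]
  rw [Finset.sum_congr rfl this, Finset.sum_const, smul_eq_mul,
    fiber_card A B hBA c j hj']
  split_ifs <;> ring


private lemma Ncount_rec (a b c : ℕ) (d : ℤ) (hab : b + c + 1 ≤ a) :
    (c + 1) * Ncount a b (c + 1) d
      = b * Ncount (a - 1) (b - 1) c (d - 1) + (a - b) * Ncount (a - 1) b c d := by
  unfold Ncount
  rw [Finset.mul_sum, Finset.mul_sum, Finset.mul_sum]
  have key : ∀ j ∈ Finset.range (c + 2),
      (c + 1) * (if d ≤ (j : ℤ) then b.choose j * (a - b).choose (c + 1 - j) else 0)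
        = (if d ≤ (j : ℤ) then (j * b.choose j) * (a - b).choose (c + 1 - j) else 0)
          + (if d ≤ (j : ℤ) then b.choose j * ((c + 1 - j) * (a - b).choose (c + 1 - j)) else 0) := by
    intro j hj
    have hj' : j ≤ c + 1 := by
      have := Finset.mem_range.mp hj; omega
    split_ifs
    · generalize hK : c + 1 - j = k
      have hck : c + 1 = j + k := by omega
      rw [hck]; ring
    · simp
  rw [show (Finset.range (c + 1 + 1)) = Finset.range (c + 2) from rfl,
    Finset.sum_congr rfl key, Finset.sum_add_distrib]
  congr 1
  · -- first sum = b * Ncount (a-1) (b-1) c (d-1)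
    rw [Finset.sum_range_succ' (fun j =>
      if d ≤ (j : ℤ) then (j * b.choose j) * (a - b).choose (c + 1 - j) else 0) (c + 1)]
    simp only [Nat.cast_zero, Nat.cast_add, Nat.cast_one, zero_mul, Nat.zero_mul, ite_self,
      add_zero]
    refine Finset.sum_congr rfl fun x hx => ?_
    have hcond : (d ≤ (x : ℤ) + 1) = (d - 1 ≤ (x : ℤ)) := by
      simp only [eq_iff_iff]; omega
    simp only [hcond]
    have hsub : c + 1 - (x + 1) = c - x := by omega
    simp only [hsub]
    split_ifs with h
    · rcases b with _ | n
      · simp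
      · have h1 : a - 1 - (n + 1 - 1) = a - (n + 1) := by omega
        rw [h1]
        have h2 := Nat.add_one_mul_choose_eq n x
        -- (n+1) * choose n x = choose (n+1) (x+1) * (x+1)
        calc (x + 1) * (n + 1).choose (x + 1) * (a - (n + 1)).choose (c - x)
            = ((n + 1).choose (x + 1) * (x + 1)) * (a - (n + 1)).choose (c - x) := by ring
          _ = ((n + 1) * n.choose x) * (a - (n + 1)).choose (c - x) := by rw [← h2]
          _ = (n + 1) * (n.choose x * (a - (n + 1)).choose (c - x)) := by ring
    · simp
  · -- second sum = (a - b) * Ncount (a-1) b c d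
    rw [Finset.sum_range_succ (fun j =>
      if d ≤ (j : ℤ) then b.choose j * ((c + 1 - j) * (a - b).choose (c + 1 - j)) else 0) (c + 1)]
    simp only [Nat.sub_self, Nat.zero_mul, mul_zero, ite_self, add_zero]
    refine Finset.sum_congr rfl fun j hj => ?_
    have hjc : j ≤ c := by
      have := Finset.mem_range.mp hj; omega
    split_ifs with h
    · obtain ⟨m, hm⟩ : ∃ m, a - b = m + 1 := ⟨a - b - 1, by omega⟩
      have h1 : a - 1 - b = m := by omega
      have h2 : c + 1 - j = (c - j) + 1 := by omega
      rw [h1, hm, h2]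
      have h3 := Nat.add_one_mul_choose_eq m (c - j)
      calc b.choose j * (((c - j) + 1) * (m + 1).choose ((c - j) + 1))
          = b.choose j * ((m + 1).choose ((c - j) + 1) * ((c - j) + 1)) := by ring
        _ = b.choose j * ((m + 1) * m.choose (c - j)) := by rw [← h3]
        _ = (m + 1) * (b.choose j * m.choose (c - j)) := by ring
    · simp


private def Btail (c : ℕ) (p : ℝ) (d : ℤ) : ℝ :=
  ∑ j ∈ Finset.range (c + 1),
    if d ≤ (j : ℤ) then (c.choose j : ℝ) * p ^ j * (1 - p) ^ (c - j) else 0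

private lemma Btail_succ (c : ℕ) (p : ℝ) (d : ℤ) :
    Btail (c + 1) p d = p * Btail c p (d - 1) + (1 - p) * Btail c p d := by
  unfold Btail
  rw [Finset.sum_range_succ' (fun j =>
      if d ≤ (j : ℤ) then ((c + 1).choose j : ℝ) * p ^ j * (1 - p) ^ (c + 1 - j) else 0) (c + 1)]
  have split : ∀ k ∈ Finset.range (c + 1),
      (if d ≤ ((k : ℤ) + 1) then ((c + 1).choose (k + 1) : ℝ) * p ^ (k + 1) * (1 - p) ^ (c + 1 - (k + 1)) else 0)
        = p * (if d - 1 ≤ (k : ℤ) then (c.choose k : ℝ) * p ^ k * (1 - p) ^ (c - k) else 0)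
          + (if d ≤ ((k : ℤ) + 1) then (c.choose (k + 1) : ℝ) * p ^ (k + 1) * (1 - p) ^ (c - k) else 0) := by
    intro k hk
    have hcond : (d ≤ (k : ℤ) + 1) = (d - 1 ≤ (k : ℤ)) := by simp only [eq_iff_iff]; omega
    have hsub : c + 1 - (k + 1) = c - k := by omega
    simp only [hcond, hsub, Nat.choose_succ_succ c k]
    split_ifs with h
    · push_cast; ring
    · ring
  calc (∑ k ∈ Finset.range (c + 1),
        if d ≤ ((k : ℤ) + 1) then ((c + 1).choose (k + 1) : ℝ) * p ^ (k + 1) * (1 - p) ^ (c + 1 - (k + 1)) else 0)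
        + (if d ≤ ((0 : ℕ) : ℤ) then ((c + 1).choose 0 : ℝ) * p ^ 0 * (1 - p) ^ (c + 1 - 0) else 0)
      = (p * ∑ k ∈ Finset.range (c + 1),
          (if d - 1 ≤ (k : ℤ) then (c.choose k : ℝ) * p ^ k * (1 - p) ^ (c - k) else 0))
        + ((∑ k ∈ Finset.range (c + 1),
          (if d ≤ ((k : ℤ) + 1) then (c.choose (k + 1) : ℝ) * p ^ (k + 1) * (1 - p) ^ (c - k) else 0))
          + (if d ≤ ((0 : ℕ) : ℤ) then ((c + 1).choose 0 : ℝ) * p ^ 0 * (1 - p) ^ (c + 1 - 0) else 0)) := by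
        rw [Finset.sum_congr rfl split, Finset.sum_add_distrib, ← Finset.mul_sum]
        push_cast
        ring
    _ = p * Btail c p (d - 1) + (1 - p) * Btail c p d := by
        congr 1
        -- second component
        rw [Finset.sum_range_succ (fun k =>
          if d ≤ ((k : ℤ) + 1) then (c.choose (k + 1) : ℝ) * p ^ (k + 1) * (1 - p) ^ (c - k) else 0) c]
        simp only [Nat.choose_succ_self, Nat.cast_zero, zero_mul, ite_self, add_zero]
        unfold Btail
        rw [Finset.sum_range_succ' (fun j =>
          if d ≤ (j : ℤ) then (c.choose j : ℝ) * p ^ j * (1 - p) ^ (c - j) else 0) c,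
          mul_add, Finset.mul_sum]
        congr 1
        · refine Finset.sum_congr rfl fun k hk => ?_
          have hkc : k < c := Finset.mem_range.mp hk
          have hsub : c - k = (c - (k + 1)) + 1 := by omega
          push_cast
          split_ifs with h
          · rw [hsub]; ring
          · ring
        · have hsub : c + 1 - 0 = c + 1 := rfl
          simp only [Nat.choose_zero_right, Nat.cast_one, one_mul, pow_zero, Nat.sub_zero,
            Nat.cast_zero, hsub]
          split_ifs with h
          · rw [pow_succ]; ring
          · ring

private lemma Btail_mono (c : ℕ) (p : ℝ) (hp0 : 0 ≤ p) (hp1 : p ≤ 1) (d e : ℤ) (hde : d ≤ e) :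
    Btail c p e ≤ Btail c p d := by
  unfold Btail
  refine Finset.sum_le_sum fun j _ => ?_
  split_ifs with h1 h2 h2
  · exact le_rfl
  · exact absurd (hde.trans h1) h2
  · exact mul_nonneg (mul_nonneg (by positivity) (pow_nonneg hp0 _)) (pow_nonneg (by linarith) _)
  · exact le_rfl


private lemma main_ind (p : ℝ) (hp0 : 0 ≤ p) (hp1 : p ≤ 1) :
    ∀ c a b : ℕ, b + c ≤ a → (b : ℝ) ≤ p * ((a : ℝ) - (c : ℝ)) → ∀ d : ℤ,
    (Ncount a b c d : ℝ) / (a.choose c : ℝ) ≤ Btail c p d := by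
  intro c
  induction c with
  | zero =>
    intro a b hba hbp d
    norm_num [Ncount, Btail]
  | succ c ih =>
    intro a b hba hbp d
    have ha1 : 1 ≤ a := by omega
    have hab : b ≤ a := by omega
    set n : ℝ := (Ncount a b (c + 1) d : ℝ) with hn
    set n1 : ℝ := (Ncount (a - 1) (b - 1) c (d - 1) : ℝ) with hn1
    set n2 : ℝ := (Ncount (a - 1) b c d : ℝ) with hn2
    set K : ℝ := (a.choose (c + 1) : ℝ) with hK
    set K' : ℝ := ((a - 1).choose c : ℝ) with hK'
    set T1 : ℝ := Btail c p (d - 1) with hT1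
    set T2 : ℝ := Btail c p d with hT2
    have hKpos : (0 : ℝ) < K := by
      rw [hK]
      exact_mod_cast Nat.choose_pos (by omega : c + 1 ≤ a)
    have hK'pos : (0 : ℝ) < K' := by
      rw [hK']
      exact_mod_cast Nat.choose_pos (by omega : c ≤ a - 1)
    have hcasta : ((a - 1 : ℕ) : ℝ) = (a : ℝ) - 1 := by
      push_cast [Nat.cast_sub ha1]; ring
    have hbp' : (b : ℝ) ≤ p * (((a - 1 : ℕ) : ℝ) - (c : ℝ)) := by
      rw [hcasta]
      push_cast at hbp
      linarith
    have hIH1 : n1 / K' ≤ T1 := by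
      refine ih (a - 1) (b - 1) (by omega) ?_ (d - 1)
      calc ((b - 1 : ℕ) : ℝ) ≤ (b : ℝ) := by exact_mod_cast Nat.sub_le b 1
        _ ≤ p * (((a - 1 : ℕ) : ℝ) - (c : ℝ)) := hbp'
    have hIH2 : n2 / K' ≤ T2 := ih (a - 1) b (by omega) hbp' d
    have h1 : n1 ≤ T1 * K' := by
      rw [div_le_iff₀ hK'pos] at hIH1; exact hIH1
    have h2 : n2 ≤ T2 * K' := by
      rw [div_le_iff₀ hK'pos] at hIH2; exact hIH2
    have hT : T2 ≤ T1 := Btail_mono c p hp0 hp1 (d - 1) d (by omega)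
    have hpa : (b : ℝ) ≤ p * (a : ℝ) := by
      push_cast at hbp
      nlinarith [mul_nonneg hp0 (by positivity : (0:ℝ) ≤ (c : ℝ) + 1)]
    have fact1 : ((c : ℝ) + 1) * n = (b : ℝ) * n1 + ((a : ℝ) - (b : ℝ)) * n2 := by
      have := Ncount_rec a b c d hba
      have h := congrArg (fun x : ℕ => (x : ℝ)) this
      push_cast [Nat.cast_sub hab] at h
      rw [hn, hn1, hn2]
      push_cast
      linarith [h]
    have fact2 : ((c : ℝ) + 1) * K = (a : ℝ) * K' := by
      have h := Nat.add_one_mul_choose_eq (a - 1) c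
      have ha' : a - 1 + 1 = a := by omega
      rw [ha'] at h
      have h' := congrArg (fun x : ℕ => (x : ℝ)) h
      push_cast at h'
      rw [hK, hK', hcasta] at *
      push_cast
      linarith [h']
    rw [Btail_succ c p d, ← hT1, ← hT2, div_le_iff₀ hKpos]
    have hc1 : (0 : ℝ) < (c : ℝ) + 1 := by positivity
    have hx1 : (b : ℝ) * n1 ≤ (b : ℝ) * (T1 * K') :=
      mul_le_mul_of_nonneg_left h1 (by positivity)
    have hx2 : ((a : ℝ) - (b : ℝ)) * n2 ≤ ((a : ℝ) - (b : ℝ)) * (T2 * K') := by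
      have : (0:ℝ) ≤ (a : ℝ) - (b : ℝ) := by
        have : (b:ℝ) ≤ (a:ℝ) := by exact_mod_cast hab
        linarith
      exact mul_le_mul_of_nonneg_left h2 this
    have hx4 : (0 : ℝ) ≤ ((p * (a : ℝ) - (b : ℝ)) * (T1 - T2)) * K' := by
      apply mul_nonneg
      · apply mul_nonneg <;> linarith
      · linarith
    have hgoal : (b : ℝ) * n1 + ((a : ℝ) - (b : ℝ)) * n2
        ≤ (p * T1 + (1 - p) * T2) * ((a : ℝ) * K') := by nlinarith [hx1, hx2, hx4]
    calc n = (((c : ℝ) + 1) * n) / ((c : ℝ) + 1) := by field_simp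
      _ = ((b : ℝ) * n1 + ((a : ℝ) - (b : ℝ)) * n2) / ((c : ℝ) + 1) := by rw [fact1]
      _ ≤ ((p * T1 + (1 - p) * T2) * ((a : ℝ) * K')) / ((c : ℝ) + 1) :=
          (div_le_div_iff_of_pos_right hc1).mpr hgoal
      _ = ((p * T1 + (1 - p) * T2) * (((c : ℝ) + 1) * K)) / ((c : ℝ) + 1) := by rw [fact2]
      _ = (p * T1 + (1 - p) * T2) * K := by field_simp


theorem hypergeometric_le_binomial {α : Type*} [DecidableEq α]
    (A B : Finset α) (hBA : B ⊆ A) (a b c : ℕ) (d : ℤ)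
    (ha : A.card = a) (hb : B.card = b) (hbc : b + c ≤ a) :
    (((A.powersetCard c).filter fun S => d ≤ ((S ∩ B).card : ℤ)).card : ℝ) /
        (a.choose c : ℝ) ≤
      ∑ j ∈ Finset.range (c + 1),
        if d ≤ (j : ℤ) then
          (c.choose j : ℝ) * ((b : ℝ) / ((a : ℝ) - c)) ^ j *
            (1 - (b : ℝ) / ((a : ℝ) - c)) ^ (c - j)
        else 0 := by
  subst ha hb
  set a := A.card
  set b := B.card
  set p : ℝ := (b : ℝ) / ((a : ℝ) - (c : ℝ)) with hp
  have hca : (c : ℝ) ≤ (a : ℝ) := by exact_mod_cast (by omega : c ≤ a)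
  have hba' : (b : ℝ) ≤ (a : ℝ) - (c : ℝ) := by
    have : (b : ℝ) + (c : ℝ) ≤ (a : ℝ) := by exact_mod_cast hbc
    linarith
  have hp0 : 0 ≤ p := div_nonneg (by positivity) (by linarith)
  have hp1 : p ≤ 1 := div_le_one_of_le₀ hba' (by linarith)
  have hcond : (b : ℝ) ≤ p * ((a : ℝ) - (c : ℝ)) := by
    by_cases hac : (a : ℝ) - (c : ℝ) = 0
    · have hb0 : (b : ℝ) = 0 := le_antisymm (by linarith) (by positivity)
      rw [hb0, hp, hb0]
      simp
    · rw [hp, div_mul_cancel₀ _ hac]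
  rw [count_eq A B hBA c d]
  exact main_ind p hp0 hp1 c a b hbc hcond d
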